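/- Let u, v, w, x be (not necessarily distinct) points of ℝ². There exists no pair (m, c) with m > 0 such that x lies strictly above the line L_{m,c} while u, v, w each lie on or below L_{m,c}, if and only if there is a point a = (a₁, a₂) in the convex hull of {u, v, w} such that x₁ ≥ a₁ and x₂ ≤ a₂. -/

import Mathlib

lemma clm_apply_prod (f : (ℝ × ℝ) →L[ℝ] ℝ) (p : ℝ × ℝ) :
    f p = p.1 * f (1, 0) + p.2 * f (0, 1) := by
  have hp : p = p.1 • ((1 : ℝ), (0 : ℝ)) + p.2 • ((0 : ℝ), (1 : ℝ)) := by
    ext <;> simp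
  calc f p = f (p.1 • ((1 : ℝ), (0 : ℝ)) + p.2 • ((0 : ℝ), (1 : ℝ))) := by rw [← hp]
    _ = p.1 * f (1, 0) + p.2 * f (0, 1) := by
        rw [map_add, map_smul, map_smul]; simp [smul_eq_mul]

lemma halfplane_convex (m c : ℝ) :
    Convex ℝ {p : ℝ × ℝ | p.2 ≤ m * p.1 + c} := by
  have heq : {p : ℝ × ℝ | p.2 ≤ m * p.1 + c} = {p : ℝ × ℝ | p.2 - m * p.1 ≤ c} := by
    ext p; constructor <;> intro hp <;> simp only [Set.mem_setOf_eq] at * <;> linarith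
  rw [heq]
  refine convex_halfSpace_le ⟨fun p q => ?_, fun r p => ?_⟩ c
  · simp only [Prod.fst_add, Prod.snd_add]; ring
  · simp only [Prod.smul_fst, Prod.smul_snd, smul_eq_mul]; ring

set_option maxHeartbeats 1000000 in
theorem no_separating_line_above_iff (u v w x : ℝ × ℝ) :
    (¬ ∃ m c : ℝ, m > 0 ∧
        x.2 > m * x.1 + c ∧
        u.2 ≤ m * u.1 + c ∧ v.2 ≤ m * v.1 + c ∧ w.2 ≤ m * w.1 + c) ↔
    ∃ a ∈ convexHull ℝ ({u, v, w} : Set (ℝ × ℝ)), x.1 ≥ a.1 ∧ x.2 ≤ a.2 := by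
  constructor
  · intro h
    by_contra hc
    push_neg at hc
    set K := convexHull ℝ ({u, v, w} : Set (ℝ × ℝ)) with hK
    have hKconv : Convex ℝ K := convex_convexHull ℝ _
    have hKcomp : IsCompact K := (Set.toFinite _).isCompact_convexHull ℝ
    set Q : Set (ℝ × ℝ) := {p | p.1 ≤ x.1 ∧ x.2 ≤ p.2} with hQ
    have hQclosed : IsClosed Q :=
      IsClosed.inter (isClosed_le continuous_fst continuous_const)
        (isClosed_le continuous_const continuous_snd)
    have hQconv : Convex ℝ Q := by
      intro p hp q hq a b ha hb hab
      obtain ⟨hp1, hp2⟩ := hp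
      obtain ⟨hq1, hq2⟩ := hq
      have hx1 : a * x.1 + b * x.1 = x.1 := by rw [← add_mul, hab, one_mul]
      have hx2 : a * x.2 + b * x.2 = x.2 := by rw [← add_mul, hab, one_mul]
      have h1 := mul_le_mul_of_nonneg_left hp1 ha
      have h2 := mul_le_mul_of_nonneg_left hq1 hb
      have h3 := mul_le_mul_of_nonneg_left hp2 ha
      have h4 := mul_le_mul_of_nonneg_left hq2 hb
      constructor <;>
        simp only [Prod.fst_add, Prod.snd_add, Prod.smul_fst, Prod.smul_snd, smul_eq_mul] <;>
        linarith
    have hdisj : Disjoint K Q := by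
      rw [Set.disjoint_left]
      intro a haK haQ
      exact absurd haQ.2 (not_le.mpr (hc a haK haQ.1))
    obtain ⟨f, s, t, hfs, hst, hft⟩ :=
      geometric_hahn_banach_compact_closed hKconv hKcomp hQconv hQclosed hdisj
    obtain ⟨α, hα⟩ : ∃ a, a = f (1, 0) := ⟨_, rfl⟩
    obtain ⟨β, hβ⟩ : ∃ b, b = f (0, 1) := ⟨_, rfl⟩
    have hprod : ∀ p : ℝ × ℝ, f p = p.1 * α + p.2 * β := by
      intro p; rw [hα, hβ]; exact clm_apply_prod f p
    have hxQ : x ∈ Q := ⟨le_refl _, le_refl _⟩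
    have hfx : t < x.1 * α + x.2 * β := by
      have := hft x hxQ; rwa [hprod] at this
    have huK : u ∈ K := subset_convexHull ℝ _ (by simp)
    have hvK : v ∈ K := subset_convexHull ℝ _ (by simp)
    have hwK : w ∈ K := subset_convexHull ℝ _ (by simp)
    have hu : u.1 * α + u.2 * β < s := by have := hfs u huK; rwa [hprod] at this
    have hv : v.1 * α + v.2 * β < s := by have := hfs v hvK; rwa [hprod] at this
    have hw : w.1 * α + w.2 * β < s := by have := hfs w hwK; rwa [hprod] at this
    have hαle : α ≤ 0 := by
      by_contra hpos
      push_neg at hpos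
      have hne : α ≠ 0 := ne_of_gt hpos
      obtain ⟨s0, hs0def⟩ : ∃ z : ℝ, z = (x.1 * α + x.2 * β - t) / α + 1 := ⟨_, rfl⟩
      have hs0pos : 0 < s0 := by
        rw [hs0def]
        have : 0 < (x.1 * α + x.2 * β - t) / α := div_pos (by linarith) hpos
        linarith
      have hmem : ((x.1 - s0, x.2) : ℝ × ℝ) ∈ Q := ⟨by simp; linarith, le_refl _⟩
      have h2 : t < (x.1 - s0) * α + x.2 * β := by
        have := hft _ hmem; rwa [hprod] at this
      have hsa : s0 * α = (x.1 * α + x.2 * β - t) + α := by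
        rw [hs0def]; field_simp
      nlinarith [h2, hsa, hpos]
    have hβge : 0 ≤ β := by
      by_contra hneg
      push_neg at hneg
      have hne : β ≠ 0 := ne_of_lt hneg
      obtain ⟨s0, hs0def⟩ : ∃ z : ℝ, z = (t - (x.1 * α + x.2 * β)) / β + 1 := ⟨_, rfl⟩
      have hs0pos : 0 < s0 := by
        rw [hs0def]
        have : 0 < (t - (x.1 * α + x.2 * β)) / β := div_pos_of_neg_of_neg (by linarith) hneg
        linarith
      have hmem : ((x.1, x.2 + s0) : ℝ × ℝ) ∈ Q := ⟨le_refl _, by simp; linarith⟩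
      have h2 : t < x.1 * α + (x.2 + s0) * β := by
        have := hft _ hmem; rwa [hprod] at this
      have hsb : s0 * β = (t - (x.1 * α + x.2 * β)) + β := by
        rw [hs0def]; field_simp
      nlinarith [h2, hsb, hneg]
    rcases lt_or_eq_of_le hαle with hαlt | hαeq
    · rcases eq_or_lt_of_le hβge with hβeq | hβlt
      · -- β = 0, α < 0 : all three points have first coordinate > x.1
        rw [← hβeq] at hu hv hw hfx
        simp only [mul_zero, add_zero] at hu hv hw hfx
        have hu1 : x.1 < u.1 := by nlinarith [hu, hfx, hst, hαlt]
        have hv1 : x.1 < v.1 := by nlinarith [hv, hfx, hst, hαlt]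
        have hw1 : x.1 < w.1 := by nlinarith [hw, hfx, hst, hαlt]
        apply h
        set m : ℝ := max 1 (max ((u.2 - x.2 + 1) / (u.1 - x.1))
            (max ((v.2 - x.2 + 1) / (v.1 - x.1)) ((w.2 - x.2 + 1) / (w.1 - x.1)))) with hm
        have hm1 : (1 : ℝ) ≤ m := le_max_left _ _
        have hmu : (u.2 - x.2 + 1) / (u.1 - x.1) ≤ m :=
          le_trans (le_max_left _ _) (le_max_right _ _)
        have hmv : (v.2 - x.2 + 1) / (v.1 - x.1) ≤ m :=
          le_trans (le_trans (le_max_left _ _) (le_max_right _ _)) (le_max_right _ _)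
        have hmw : (w.2 - x.2 + 1) / (w.1 - x.1) ≤ m :=
          le_trans (le_trans (le_max_right _ _) (le_max_right _ _)) (le_max_right _ _)
        refine ⟨m, x.2 - 1 - m * x.1, by linarith, by linarith, ?_, ?_, ?_⟩
        · have := (div_le_iff₀ (by linarith : (0:ℝ) < u.1 - x.1)).mp hmu
          nlinarith [this]
        · have := (div_le_iff₀ (by linarith : (0:ℝ) < v.1 - x.1)).mp hmv
          nlinarith [this]
        · have := (div_le_iff₀ (by linarith : (0:ℝ) < w.1 - x.1)).mp hmw
          nlinarith [this]
      · -- α < 0, β > 0 : main case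
        apply h
        refine ⟨-α / β, s / β, div_pos (by linarith) hβlt, ?_, ?_, ?_, ?_⟩
        · have heq : -α / β * x.1 + s / β = (-α * x.1 + s) / β := by ring
          rw [gt_iff_lt, heq, div_lt_iff₀ hβlt]
          nlinarith [hfx, hst]
        · have heq : -α / β * u.1 + s / β = (-α * u.1 + s) / β := by ring
          rw [heq, le_div_iff₀ hβlt]
          nlinarith [hu]
        · have heq : -α / β * v.1 + s / β = (-α * v.1 + s) / β := by ring
          rw [heq, le_div_iff₀ hβlt]
          nlinarith [hv]
        · have heq : -α / β * w.1 + s / β = (-α * w.1 + s) / β := by ring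
          rw [heq, le_div_iff₀ hβlt]
          nlinarith [hw]
    · rcases eq_or_lt_of_le hβge with hβeq | hβlt
      · -- α = 0, β = 0 : contradiction
        rw [hαeq, ← hβeq] at hu hfx
        simp only [mul_zero, zero_add, add_zero] at hu hfx
        linarith
      · -- α = 0, β > 0 : all three points have second coordinate below x.2
        rw [hαeq] at hu hv hw hfx
        simp only [mul_zero, zero_add, add_zero] at hu hv hw hfx
        set T : ℝ := s / β with hT
        have huT : u.2 < T := (lt_div_iff₀ hβlt).mpr (by linarith)
        have hvT : v.2 < T := (lt_div_iff₀ hβlt).mpr (by linarith)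
        have hwT : w.2 < T := (lt_div_iff₀ hβlt).mpr (by linarith)
        have hxT : T < x.2 := by
          rw [hT, div_lt_iff₀ hβlt]; linarith
        apply h
        have hdu0 : 0 < max (x.1 - u.1) 0 + 1 := by
          have := le_max_right (x.1 - u.1) 0; linarith
        have hdv0 : 0 < max (x.1 - v.1) 0 + 1 := by
          have := le_max_right (x.1 - v.1) 0; linarith
        have hdw0 : 0 < max (x.1 - w.1) 0 + 1 := by
          have := le_max_right (x.1 - w.1) 0; linarith
        set m : ℝ := min 1 (min ((T - u.2) / (max (x.1 - u.1) 0 + 1))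
            (min ((T - v.2) / (max (x.1 - v.1) 0 + 1))
              ((T - w.2) / (max (x.1 - w.1) 0 + 1)))) with hm
        have hm0 : 0 < m := by
          apply lt_min one_pos
          apply lt_min (div_pos (by linarith) hdu0)
          exact lt_min (div_pos (by linarith) hdv0) (div_pos (by linarith) hdw0)
        have key : ∀ p : ℝ × ℝ, p.2 < T →
            m ≤ (T - p.2) / (max (x.1 - p.1) 0 + 1) → p.2 ≤ m * p.1 + (T - m * x.1) := by
          intro p hpT hmp
          have hd0 : 0 < max (x.1 - p.1) 0 + 1 := by
            have := le_max_right (x.1 - p.1) 0; linarith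
          have h1 : m * (max (x.1 - p.1) 0 + 1) ≤ T - p.2 := (le_div_iff₀ hd0).mp hmp
          have h2 : x.1 - p.1 ≤ max (x.1 - p.1) 0 := le_max_left _ _
          have h3 : m * (x.1 - p.1) ≤ m * (max (x.1 - p.1) 0) :=
            mul_le_mul_of_nonneg_left h2 (le_of_lt hm0)
          nlinarith [h1, h3, hm0]
        refine ⟨m, T - m * x.1, hm0, by linarith, ?_, ?_, ?_⟩
        · exact key u huT (le_trans (min_le_right _ _) (min_le_left _ _))
        · exact key v hvT (le_trans (le_trans (min_le_right _ _) (min_le_right _ _))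
            (min_le_left _ _))
        · exact key w hwT (le_trans (le_trans (min_le_right _ _) (min_le_right _ _))
            (min_le_right _ _))
  · rintro ⟨a, haK, ha1, ha2⟩ ⟨m, c, hm, hx, hu, hv, hw⟩
    have hsub : convexHull ℝ ({u, v, w} : Set (ℝ × ℝ)) ⊆ {p : ℝ × ℝ | p.2 ≤ m * p.1 + c} := by
      apply convexHull_min _ (halfplane_convex m c)
      intro p hp
      simp only [Set.mem_insert_iff, Set.mem_singleton_iff] at hp
      rcases hp with rfl | rfl | rfl
      · exact hu
      · exact hv
      · exact hw
    have ha : a.2 ≤ m * a.1 + c := hsub haK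
    nlinarith [mul_nonneg (le_of_lt hm) (sub_nonneg.mpr ha1)]
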